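/- Let (Ω, ℱ, P) be a probability space, Z a measurable space, z : Ω → Z measurable, and Γ : Z → ℝ measurable with |Γ(z)| ≤ 1 almost surely. For measurable binary policies π, π* : Z → {0, 1}, define v(π) := Γ(z)·(2·π(z) − 1) and V(π) := E[v(π)]. Then the self-bounded Lipschitz property holds with constants C = 1 and L = 2: Var(v(π)) − Var(v(π*)) ≤ 2·|V(π) − V(π*)|. -/

import Mathlib

open MeasureTheory ProbabilityTheory

/-- Self-bounded Lipschitz property for binary policies with `|Γ(z)| ≤ 1`:
`Var(v(π)) − Var(v(π*)) ≤ 2 |V(π) − V(π*)|` (constants C = 1, L = 2). -/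
theorem binary_policy_self_bounded_lipschitz
    {Ω Z : Type*} [MeasurableSpace Ω] [MeasurableSpace Z]
    (μ : Measure Ω) [IsProbabilityMeasure μ]
    (z : Ω → Z) (hz : Measurable z)
    (Γ : Z → ℝ) (hΓ : Measurable Γ)
    (hΓbdd : ∀ᵐ ω ∂μ, |Γ (z ω)| ≤ 1)
    (π πs : Z → ℝ) (hπ : Measurable π) (hπs : Measurable πs)
    (hπ01 : ∀ z', π z' = 0 ∨ π z' = 1) (hπs01 : ∀ z', πs z' = 0 ∨ πs z' = 1) :
    variance (fun ω => Γ (z ω) * (2 * π (z ω) - 1)) μ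
        - variance (fun ω => Γ (z ω) * (2 * πs (z ω) - 1)) μ
      ≤ 2 * |(∫ ω, Γ (z ω) * (2 * π (z ω) - 1) ∂μ)
          - ∫ ω, Γ (z ω) * (2 * πs (z ω) - 1) ∂μ| := by
  set f : Ω → ℝ := fun ω => Γ (z ω) * (2 * π (z ω) - 1) with hf
  set g : Ω → ℝ := fun ω => Γ (z ω) * (2 * πs (z ω) - 1) with hg
  have habs : ∀ (p : Z → ℝ), (∀ z', p z' = 0 ∨ p z' = 1) →
      ∀ᵐ ω ∂μ, |Γ (z ω) * (2 * p (z ω) - 1)| ≤ 1 := by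
    intro p hp
    filter_upwards [hΓbdd] with ω hω
    rcases hp (z ω) with h | h <;> rw [h, abs_mul] <;>
      norm_num <;> exact hω
  have hfbdd := habs π hπ01
  have hgbdd := habs πs hπs01
  have hfm : Measurable f := (hΓ.comp hz).mul (((measurable_const.mul (hπ.comp hz)).sub measurable_const))
  have hgm : Measurable g := (hΓ.comp hz).mul (((measurable_const.mul (hπs.comp hz)).sub measurable_const))
  have hfLp : MemLp f 2 μ := by
    refine memLp_of_bounded (a := (-1 : ℝ)) (b := (1 : ℝ)) ?_ hfm.aestronglyMeasurable 2
    filter_upwards [hfbdd] with ω hω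
    exact abs_le.mp hω
  have hgLp : MemLp g 2 μ := by
    refine memLp_of_bounded (a := (-1 : ℝ)) (b := (1 : ℝ)) ?_ hgm.aestronglyMeasurable 2
    filter_upwards [hgbdd] with ω hω
    exact abs_le.mp hω
  rw [variance_eq_sub hfLp, variance_eq_sub hgLp]
  have hsq : ∀ᵐ ω ∂μ, (f ^ 2) ω = (g ^ 2) ω := by
    filter_upwards with ω
    rcases hπ01 (z ω) with h | h <;> rcases hπs01 (z ω) with h' | h' <;>
      simp [f, g, h, h', mul_pow] <;> ring
  have hsqeq : μ[f ^ 2] = μ[g ^ 2] := integral_congr_ae hsq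
  rw [hsqeq]
  have haf : |μ[f]| ≤ 1 := by
    have h0 := norm_integral_le_integral_norm (μ := μ) f
    simp only [Real.norm_eq_abs] at h0
    refine h0.trans ?_
    calc (∫ ω, |f ω| ∂μ) ≤ ∫ _, (1 : ℝ) ∂μ :=
        integral_mono_ae (hfLp.abs.integrable (by norm_num)) (integrable_const 1) hfbdd
    _ = 1 := by simp
  have hag : |μ[g]| ≤ 1 := by
    have h0 := norm_integral_le_integral_norm (μ := μ) g
    simp only [Real.norm_eq_abs] at h0
    refine h0.trans ?_
    calc (∫ ω, |g ω| ∂μ) ≤ ∫ _, (1 : ℝ) ∂μ :=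
        integral_mono_ae (hgLp.abs.integrable (by norm_num)) (integrable_const 1) hgbdd
    _ = 1 := by simp
  set a := μ[f]
  set b := μ[g]
  have key : b ^ 2 - a ^ 2 ≤ 2 * |a - b| := by
    have h1 : b ^ 2 - a ^ 2 = (b - a) * (b + a) := by ring
    have h2 : (b - a) * (b + a) ≤ |b - a| * |b + a| := by
      calc (b - a) * (b + a) ≤ |(b - a) * (b + a)| := le_abs_self _
      _ = |b - a| * |b + a| := abs_mul _ _
    have h3 : |b + a| ≤ 2 := by
      calc |b + a| ≤ |b| + |a| := abs_add_le _ _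
      _ ≤ 2 := by linarith [abs_le.mp haf, abs_le.mp hag, haf, hag]
    have h4 : |b - a| = |a - b| := abs_sub_comm _ _
    calc b ^ 2 - a ^ 2 ≤ |b - a| * |b + a| := by rw [h1]; exact h2
    _ ≤ |b - a| * 2 := by
        exact mul_le_mul_of_nonneg_left h3 (abs_nonneg _)
    _ = 2 * |a - b| := by rw [h4]; ring
  linarith [key]
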